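/- arXiv:2206.14160 — 3 statements merged into one kernel-verified Lean document; each statement's English description precedes it below -/
import Mathlib

section
/- Let K be the 1d heat kernel. For 0 < s < t, ‖K(t,·) − K(s,·)‖_{L¹(ℝ)} ≤ C min{1, (t−s)/s}; in particular ‖K(t,·)−K(s,·)‖_{L¹} ≤ C (t−s)^α / s^α for any α ∈ (0,1]. -/
open Real MeasureTheory

/-- The one-dimensional heat kernel `K(t,x) = (4πt)^{-1/2} exp(-x²/(4t))`. -/
noncomputable def heatKernel (t x : ℝ) : ℝ :=
    (4 * Real.pi * t) ^ (-(1 : ℝ) / 2) * Real.exp (-x ^ 2 / (4 * t))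

lemma heatKernel_eq (t : ℝ) (ht : 0 < t) (x : ℝ) :
    heatKernel t x = (4 * Real.pi * t) ^ (-(1 : ℝ) / 2) * Real.exp (-(1/(4*t)) * x ^ 2) := by
  rw [heatKernel]
  congr 1
  congr 1
  field_simp

lemma heatKernel_nonneg {t : ℝ} (ht : 0 < t) (x : ℝ) : 0 ≤ heatKernel t x := by
  rw [heatKernel]
  positivity

lemma heatKernel_integrable {t : ℝ} (ht : 0 < t) : Integrable (fun x => heatKernel t x) := by
  have h : Integrable (fun x : ℝ => Real.exp (-(1/(4*t)) * x ^ 2)) :=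
    integrable_exp_neg_mul_sq (by positivity)
  exact (h.const_mul _).congr (Filter.Eventually.of_forall fun x => (heatKernel_eq t ht x).symm)

lemma heatKernel_integral {t : ℝ} (ht : 0 < t) : ∫ x, heatKernel t x = 1 := by
  have h4 : (0:ℝ) < 4 * Real.pi * t := by positivity
  simp only [heatKernel_eq t ht]
  rw [MeasureTheory.integral_const_mul, integral_gaussian]
  have : π / (1/(4*t)) = 4 * π * t := by field_simp
  rw [this, Real.sqrt_eq_rpow, ← Real.rpow_add h4]
  norm_num

lemma hasDerivAt_heatKernel (x : ℝ) {τ : ℝ} (hτ : 0 < τ) :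
    HasDerivAt (fun u => heatKernel u x)
      (heatKernel τ x * (x ^ 2 / (4 * τ ^ 2) - 1 / (2 * τ))) τ := by
  have h4 : (0:ℝ) < 4 * Real.pi * τ := by positivity
  have h1 : HasDerivAt (fun u : ℝ => 4 * Real.pi * u) (4 * Real.pi) τ := by
    simpa using (hasDerivAt_id τ).const_mul (4 * Real.pi)
  have h2 : HasDerivAt (fun u : ℝ => (4 * Real.pi * u) ^ (-(1:ℝ)/2))
      ((-(1:ℝ)/2) * (4 * Real.pi * τ) ^ (-(1:ℝ)/2 - 1) * (4 * Real.pi)) τ :=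
    (Real.hasDerivAt_rpow_const (Or.inl h4.ne')).comp τ h1
  have h3 : HasDerivAt (fun u : ℝ => -x ^ 2 / (4 * u)) (x ^ 2 / (4 * τ ^ 2)) τ := by
    have h := (hasDerivAt_inv hτ.ne').const_mul (-x ^ 2 / 4)
    have heq : (fun u : ℝ => -x ^ 2 / 4 * u⁻¹) = fun u : ℝ => -x ^ 2 / (4 * u) := by
      funext u; field_simp
    rw [heq] at h
    exact h.congr_deriv (by ring)
  have h5 := h2.mul h3.exp
  have : heatKernel τ x * (x ^ 2 / (4 * τ ^ 2) - 1 / (2 * τ)) =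
      (-(1:ℝ)/2) * (4 * Real.pi * τ) ^ (-(1:ℝ)/2 - 1) * (4 * Real.pi) * Real.exp (-x ^ 2 / (4 * τ))
      + (4 * Real.pi * τ) ^ (-(1:ℝ)/2) * (Real.exp (-x ^ 2 / (4 * τ)) * (x ^ 2 / (4 * τ ^ 2))) := by
    rw [heatKernel, Real.rpow_sub h4, Real.rpow_one]
    field_simp
    ring
  rw [this]
  exact h5

lemma deriv_bound {s t τ x : ℝ} (hs : 0 < s) (hsτ : s ≤ τ) (hτt : τ ≤ t) (h2 : t ≤ 2*s) :
    |heatKernel τ x * (x ^ 2 / (4 * τ ^ 2) - 1 / (2 * τ))| ≤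
      (4 * Real.pi * s) ^ (-(1:ℝ)/2) * (5 / s) * Real.exp (-x^2/(16*s)) := by
  have hτ : 0 < τ := hs.trans_le hsτ
  have hπ := Real.pi_pos
  have hK : heatKernel τ x ≤ (4 * Real.pi * s) ^ (-(1:ℝ)/2) * Real.exp (-x^2/(8*s)) := by
    rw [heatKernel]
    have ha : (4 * Real.pi * τ) ^ (-(1:ℝ)/2) ≤ (4 * Real.pi * s) ^ (-(1:ℝ)/2) :=
      Real.rpow_le_rpow_of_nonpos (by positivity) (by nlinarith) (by norm_num)
    have hb : Real.exp (-x^2/(4*τ)) ≤ Real.exp (-x^2/(8*s)) := by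
      apply Real.exp_le_exp.2
      rw [neg_div, neg_div, neg_le_neg_iff]
      exact div_le_div_of_nonneg_left (sq_nonneg x) (by positivity) (by linarith)
    exact mul_le_mul ha hb (by positivity) (by positivity)
  have habs : |x ^ 2 / (4 * τ ^ 2) - 1 / (2 * τ)| ≤ x ^ 2 / (4 * s ^ 2) + 1 / (2 * s) := by
    refine (abs_sub _ _).trans ?_
    rw [abs_of_nonneg (by positivity), abs_of_nonneg (by positivity)]
    have : x ^ 2 / (4 * τ ^ 2) ≤ x ^ 2 / (4 * s ^ 2) :=
      div_le_div_of_nonneg_left (sq_nonneg x) (by positivity) (by nlinarith)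
    have h1τ : 1 / (2 * τ) ≤ 1 / (2 * s) :=
      div_le_div_of_nonneg_left (by norm_num) (by positivity) (by linarith)
    linarith
  have hKnn : 0 ≤ heatKernel τ x := heatKernel_nonneg hτ x
  calc |heatKernel τ x * (x ^ 2 / (4 * τ ^ 2) - 1 / (2 * τ))|
      = heatKernel τ x * |x ^ 2 / (4 * τ ^ 2) - 1 / (2 * τ)| := by
        rw [abs_mul, abs_of_nonneg hKnn]
    _ ≤ ((4 * Real.pi * s) ^ (-(1:ℝ)/2) * Real.exp (-x^2/(8*s))) *
          (x ^ 2 / (4 * s ^ 2) + 1 / (2 * s)) :=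
        mul_le_mul hK habs (abs_nonneg _) (by positivity)
    _ ≤ (4 * Real.pi * s) ^ (-(1:ℝ)/2) * (5 / s) * Real.exp (-x^2/(16*s)) := by
        have hrp : (0:ℝ) ≤ (4 * Real.pi * s) ^ (-(1:ℝ)/2) := by positivity
        set u := x^2/(16*s) with hu
        have hu0 : 0 ≤ u := by positivity
        have hexp : Real.exp (-x^2/(8*s)) = Real.exp (-u) * Real.exp (-u) := by
          rw [← Real.exp_add]; congr 1; rw [hu]; field_simp; ring
        have hue : u * Real.exp (-u) ≤ 1 := by
          have h1 : u ≤ Real.exp u := by linarith [Real.add_one_le_exp u]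
          have h2 : Real.exp (-u) * Real.exp u = 1 := by rw [← Real.exp_add]; simp
          nlinarith [Real.exp_pos (-u)]
        have he1 : Real.exp (-u) ≤ 1 := Real.exp_le_one_iff.2 (by linarith)
        have hx4 : x ^ 2 / (4 * s ^ 2) = 4 * u / s := by rw [hu]; field_simp; ring
        have key : Real.exp (-u) * (x ^ 2 / (4 * s ^ 2) + 1 / (2 * s)) ≤ 5 / s := by
          rw [hx4]
          have : Real.exp (-u) * (4 * u / s + 1 / (2 * s))
              = (4 / s) * (u * Real.exp (-u)) + Real.exp (-u) * (1 / (2 * s)) := by ring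
          rw [this]
          have hh : 4 / s * (u * Real.exp (-u)) + Real.exp (-u) * (1 / (2 * s))
              ≤ 4 / s * 1 + 1 * (1 / (2 * s)) := by
            gcongr <;> positivity
          have h12 : 1 / (2 * s) ≤ 1 / s :=
            div_le_div_of_nonneg_left (by norm_num) hs (by linarith)
          have h45 : 4 / s + 1 / s = 5 / s := by ring
          linarith
        have hex16 : Real.exp (-x^2/(16*s)) = Real.exp (-u) := by rw [hu, neg_div]
        calc (4 * Real.pi * s) ^ (-(1:ℝ)/2) * Real.exp (-x^2/(8*s)) *
              (x ^ 2 / (4 * s ^ 2) + 1 / (2 * s))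
            = (4 * Real.pi * s) ^ (-(1:ℝ)/2) *
              (Real.exp (-u) * (x ^ 2 / (4 * s ^ 2) + 1 / (2 * s))) * Real.exp (-u) := by
              rw [hexp]; ring
          _ ≤ (4 * Real.pi * s) ^ (-(1:ℝ)/2) * (5 / s) * Real.exp (-u) := by
              gcongr
          _ = (4 * Real.pi * s) ^ (-(1:ℝ)/2) * (5 / s) * Real.exp (-x^2/(16*s)) := by
              rw [hex16]

lemma pointwise_bound {s t : ℝ} (hs : 0 < s) (hst : s < t) (h2 : t ≤ 2*s) (x : ℝ) :
    |heatKernel t x - heatKernel s x| ≤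
      (4 * Real.pi * s) ^ (-(1:ℝ)/2) * (5 / s) * Real.exp (-x^2/(16*s)) * (t - s) := by
  have h := Convex.norm_image_sub_le_of_norm_hasDerivWithin_le
    (f := fun u => heatKernel u x)
    (f' := fun τ => heatKernel τ x * (x ^ 2 / (4 * τ ^ 2) - 1 / (2 * τ)))
    (s := Set.Icc s t)
    (C := (4 * Real.pi * s) ^ (-(1:ℝ)/2) * (5 / s) * Real.exp (-x^2/(16*s)))
    (fun τ hτ => (hasDerivAt_heatKernel x (hs.trans_le hτ.1)).hasDerivWithinAt)
    (fun τ hτ => by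
      rw [Real.norm_eq_abs]
      exact deriv_bound hs hτ.1 hτ.2 h2)
    (convex_Icc s t)
    (Set.left_mem_Icc.2 hst.le)
    (Set.right_mem_Icc.2 hst.le)
  simpa [Real.norm_eq_abs, abs_of_nonneg (show (0:ℝ) ≤ t - s by linarith)] using h

lemma sqrt_combo {s : ℝ} (hs : 0 < s) :
    (4 * Real.pi * s) ^ (-(1:ℝ)/2) * Real.sqrt (Real.pi / (1/(16*s))) = 2 := by
  have hπ := Real.pi_pos
  have h4 : (0:ℝ) < 4 * Real.pi * s := by positivity
  have h1 : Real.pi / (1/(16*s)) = 4 * (4 * Real.pi * s) := by field_simp; ring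
  rw [h1, Real.sqrt_mul (by norm_num), show Real.sqrt 4 = 2 by
    rw [show (4:ℝ) = 2^2 by norm_num, Real.sqrt_sq (by norm_num)]]
  rw [show (-(1:ℝ)/2) = -(1/2) by norm_num, Real.rpow_neg h4.le, ← Real.sqrt_eq_rpow]
  have hne : Real.sqrt (4 * Real.pi * s) ≠ 0 := by positivity
  field_simp

lemma core_bound {s t : ℝ} (hs : 0 < s) (hst : s < t) (h2 : t ≤ 2*s) :
    (∫ x : ℝ, |heatKernel t x - heatKernel s x|) ≤ 10 * ((t - s) / s) := by
  have ht : 0 < t := hs.trans hst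
  set c : ℝ := (4 * Real.pi * s) ^ (-(1:ℝ)/2) * (5 / s) with hc
  have hgauss : Integrable (fun x : ℝ => Real.exp (-(1/(16*s)) * x ^ 2)) :=
    integrable_exp_neg_mul_sq (by positivity)
  have hge : ∀ x : ℝ, c * Real.exp (-(1/(16*s)) * x ^ 2) * (t - s)
      = c * Real.exp (-x^2/(16*s)) * (t - s) := by
    intro x
    congr 2
    congr 1
    field_simp
  have hgint : Integrable (fun x : ℝ => c * Real.exp (-x^2/(16*s)) * (t - s)) :=
    ((hgauss.const_mul c).mul_const (t - s)).congr (Filter.Eventually.of_forall hge)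
  have hint : Integrable (fun x : ℝ => |heatKernel t x - heatKernel s x|) :=
    ((heatKernel_integrable ht).sub (heatKernel_integrable hs)).abs
  have hmono := integral_mono hint hgint (pointwise_bound hs hst h2)
  have hval : (∫ x : ℝ, c * Real.exp (-x^2/(16*s)) * (t - s)) = 10 * ((t - s) / s) := by
    rw [← MeasureTheory.integral_congr_ae (Filter.Eventually.of_forall hge)]
    rw [MeasureTheory.integral_mul_const, MeasureTheory.integral_const_mul, integral_gaussian]
    rw [hc]
    have : (4 * Real.pi * s) ^ (-(1:ℝ)/2) * (5 / s) * Real.sqrt (π / (1/(16*s)))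
        = ((4 * Real.pi * s) ^ (-(1:ℝ)/2) * Real.sqrt (π / (1/(16*s)))) * (5 / s) := by ring
    rw [this, sqrt_combo hs]
    ring
  linarith [hmono, hval.le, hval.ge]

/-- There is a universal `C > 0` such that for all `0 < s < t`,
`‖K(t,·) − K(s,·)‖_{L¹(ℝ)} ≤ C min{1, (t−s)/s}`, and in particular
`‖K(t,·) − K(s,·)‖_{L¹(ℝ)} ≤ C (t−s)^α / s^α` for every `α ∈ (0,1]`. -/
theorem heatKernel_time_difference_L1_bound :
    ∃ C : ℝ, 0 < C ∧ ∀ s t : ℝ, 0 < s → s < t →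
      (∫ x : ℝ, |heatKernel t x - heatKernel s x|) ≤ C * min 1 ((t - s) / s) ∧
      ∀ α : ℝ, 0 < α → α ≤ 1 →
        (∫ x : ℝ, |heatKernel t x - heatKernel s x|) ≤ C * (t - s) ^ α / s ^ α := by
  refine ⟨10, by norm_num, fun s t hs hst => ?_⟩
  have ht : 0 < t := hs.trans hst
  have hr : 0 < (t - s) / s := div_pos (by linarith) hs
  have key : (∫ x : ℝ, |heatKernel t x - heatKernel s x|) ≤ 10 * min 1 ((t - s) / s) := by
    rcases le_or_gt t (2*s) with h2 | h2
    · have hmin : min 1 ((t - s) / s) = (t - s) / s :=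
        min_eq_right (by rw [div_le_one hs]; linarith)
      rw [hmin]
      exact core_bound hs hst h2
    · have hmin : min 1 ((t - s) / s) = 1 :=
        min_eq_left (by rw [le_div_iff₀ hs]; linarith)
      rw [hmin, mul_one]
      have hint : Integrable (fun x : ℝ => |heatKernel t x - heatKernel s x|) :=
        ((heatKernel_integrable ht).sub (heatKernel_integrable hs)).abs
      have hsum : Integrable (fun x : ℝ => heatKernel t x + heatKernel s x) :=
        (heatKernel_integrable ht).add (heatKernel_integrable hs)
      have hb : ∀ x : ℝ, |heatKernel t x - heatKernel s x| ≤ heatKernel t x + heatKernel s x := by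
        intro x
        refine (abs_sub _ _).trans ?_
        rw [abs_of_nonneg (heatKernel_nonneg ht x), abs_of_nonneg (heatKernel_nonneg hs x)]
      have := integral_mono hint hsum hb
      rw [MeasureTheory.integral_add (heatKernel_integrable ht) (heatKernel_integrable hs),
        heatKernel_integral ht, heatKernel_integral hs] at this
      linarith
  refine ⟨key, fun α hα hα1 => ?_⟩
  have hmin : min 1 ((t - s) / s) ≤ ((t - s) / s) ^ α := by
    rcases le_total ((t - s) / s) 1 with h | h
    · rw [min_eq_right h]
      calc (t - s) / s = ((t - s) / s) ^ (1:ℝ) := (Real.rpow_one _).symm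
        _ ≤ ((t - s) / s) ^ α := Real.rpow_le_rpow_of_exponent_ge hr h hα1
    · rw [min_eq_left h]
      calc (1:ℝ) = (1:ℝ) ^ α := (Real.one_rpow α).symm
        _ ≤ ((t - s) / s) ^ α := Real.rpow_le_rpow (by norm_num) h hα.le
  have hdiv : ((t - s) / s) ^ α = (t - s) ^ α / s ^ α :=
    Real.div_rpow (by linarith) hs.le α
  calc (∫ x : ℝ, |heatKernel t x - heatKernel s x|)
      ≤ 10 * min 1 ((t - s) / s) := key
    _ ≤ 10 * ((t - s) / s) ^ α := by linarith [hmin]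
    _ = 10 * (t - s) ^ α / s ^ α := by rw [hdiv]; ring
end

section
/- (Hardy-type inequality) For any nonnegative measurable h : (0,∞) → [0,∞) and p ∈ (1,∞), ∫₀^∞ (∫₀^∞ h(x)/(x+y) dx)^p dy ≤ C_p ∫₀^∞ h(x)^p dx, where one may take C_p = 2^{p-1}(p^p/(p−1)^p + p^p). -/
open MeasureTheory ENNReal

-- power integral on Ioc
private lemma lint_rpow_Ioc {c y : ℝ} (hc : -1 < c) (hy : 0 < y) :
    ∫⁻ x in Set.Ioc (0:ℝ) y, ENNReal.ofReal (x ^ c) = ENNReal.ofReal (y ^ (c+1) / (c+1)) := by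
  have hint : IntegrableOn (fun x : ℝ => x ^ c) (Set.Ioc 0 y) := by
    have := intervalIntegral.intervalIntegrable_rpow' (a := 0) (b := y) hc
    rwa [intervalIntegrable_iff_integrableOn_Ioc_of_le hy.le] at this
  rw [← MeasureTheory.ofReal_integral_eq_lintegral_ofReal hint ?_]
  · congr 1
    have h1 := integral_rpow (a := 0) (b := y) (Or.inl hc)
    rw [intervalIntegral.integral_of_le hy.le] at h1
    rw [h1, Real.zero_rpow (by linarith), sub_zero]
  · filter_upwards [ae_restrict_mem measurableSet_Ioc] with x hx
    exact Real.rpow_nonneg hx.1.le _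

private lemma lint_rpow_Ioi {c y : ℝ} (hc : c < -1) (hy : 0 < y) :
    ∫⁻ x in Set.Ioi y, ENNReal.ofReal (x ^ c) = ENNReal.ofReal (y ^ (c+1) / (-(c+1))) := by
  rw [← MeasureTheory.ofReal_integral_eq_lintegral_ofReal (integrableOn_Ioi_rpow_of_lt hc hy) ?_]
  · rw [integral_Ioi_rpow_of_lt hc hy]; congr 1; rw [div_neg, neg_div]
  · filter_upwards [ae_restrict_mem measurableSet_Ioi] with x hx
    exact Real.rpow_nonneg (lt_trans hy hx).le _

private lemma lint_swap {f g : ℝ → ℝ≥0∞} (hf : Measurable f) (hg : Measurable g) :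
    ∫⁻ y in Set.Ioi (0:ℝ), f y * ∫⁻ x in Set.Ioc (0:ℝ) y, g x
      = ∫⁻ x in Set.Ioi (0:ℝ), g x * ∫⁻ y in Set.Ici x, f y := by
  have hFm : Measurable (Function.uncurry fun y x =>
      (Set.Iic y).indicator (fun x' => f y * g x') x) := by
    have : (Function.uncurry fun y x => (Set.Iic y).indicator (fun x' => f y * g x') x)
        = fun z : ℝ × ℝ => {z : ℝ × ℝ | z.2 ≤ z.1}.indicator (fun z => f z.1 * g z.2) z := by
      ext z
      simp [Function.uncurry, Set.indicator_apply]
    rw [this]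
    exact ((hf.comp measurable_fst).mul (hg.comp measurable_snd)).indicator
      (measurableSet_le measurable_snd measurable_fst)
  calc ∫⁻ y in Set.Ioi (0:ℝ), f y * ∫⁻ x in Set.Ioc (0:ℝ) y, g x
      = ∫⁻ y in Set.Ioi (0:ℝ), ∫⁻ x in Set.Ioi (0:ℝ),
          (Set.Iic y).indicator (fun x' => f y * g x') x := by
        refine setLIntegral_congr_fun measurableSet_Ioi (fun y hy => ?_)
        rw [lintegral_indicator measurableSet_Iic, Measure.restrict_restrict measurableSet_Iic,
          show Set.Iic y ∩ Set.Ioi 0 = Set.Ioc (0:ℝ) y by rw [Set.inter_comm, Set.Ioi_inter_Iic],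
          lintegral_const_mul _ hg]
    _ = ∫⁻ x in Set.Ioi (0:ℝ), ∫⁻ y in Set.Ioi (0:ℝ),
          (Set.Iic y).indicator (fun x' => f y * g x') x :=
        lintegral_lintegral_swap hFm.aemeasurable
    _ = ∫⁻ x in Set.Ioi (0:ℝ), g x * ∫⁻ y in Set.Ici x, f y := by
        refine setLIntegral_congr_fun measurableSet_Ioi (fun x hx => ?_)
        have e : ∀ y, (Set.Iic y).indicator (fun x' => f y * g x') x
            = (Set.Ici x).indicator (fun y' => f y' * g x) y := by
          intro y
          by_cases hxy : x ≤ y <;> simp [Set.indicator_apply, hxy]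
        simp_rw [e]
        rw [lintegral_indicator measurableSet_Ici, Measure.restrict_restrict measurableSet_Ici,
          show Set.Ici x ∩ Set.Ioi 0 = Set.Ici x from Set.inter_eq_left.mpr fun y hy => Set.mem_Ioi.mpr (lt_of_lt_of_le (Set.mem_Ioi.mp hx) (Set.mem_Ici.mp hy)),
          lintegral_mul_const _ hf, mul_comm]

private lemma lint_swap' {f g : ℝ → ℝ≥0∞} (hf : Measurable f) (hg : Measurable g) :
    ∫⁻ y in Set.Ioi (0:ℝ), f y * ∫⁻ x in Set.Ioi y, g x
      = ∫⁻ x in Set.Ioi (0:ℝ), g x * ∫⁻ y in Set.Ioc (0:ℝ) x, f y := by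
  rw [show (∫⁻ x in Set.Ioi (0:ℝ), g x * ∫⁻ y in Set.Ioc (0:ℝ) x, f y)
      = ∫⁻ y in Set.Ioi (0:ℝ), f y * ∫⁻ x in Set.Ici y, g x from lint_swap hg hf]
  refine setLIntegral_congr_fun measurableSet_Ioi (fun y _ => ?_)
  rw [setLIntegral_congr (Ioi_ae_eq_Ici (a := y) (μ := volume))]

private lemma holder_pow {μ : Measure ℝ} {f g : ℝ → ℝ≥0∞} (hf : Measurable f)
    (hg : Measurable g) {p q : ℝ} (hpq : p.HolderConjugate q) :
    (∫⁻ x, f x * g x ∂μ) ^ p ≤ (∫⁻ x, f x ^ p ∂μ) * (∫⁻ x, g x ^ q ∂μ) ^ (p/q) := by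
  have h := ENNReal.lintegral_mul_le_Lp_mul_Lq μ hpq hf.aemeasurable hg.aemeasurable
  simp only [Pi.mul_apply] at h
  calc (∫⁻ x, f x * g x ∂μ) ^ p
      ≤ ((∫⁻ x, f x ^ p ∂μ) ^ (1/p) * (∫⁻ x, g x ^ q ∂μ) ^ (1/q)) ^ p :=
        ENNReal.rpow_le_rpow h hpq.nonneg
    _ = (∫⁻ x, f x ^ p ∂μ) * (∫⁻ x, g x ^ q ∂μ) ^ (p/q) := by
        rw [ENNReal.mul_rpow_of_nonneg _ _ hpq.nonneg, ← ENNReal.rpow_mul, ← ENNReal.rpow_mul,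
          show 1/p * p = 1 by rw [one_div, inv_mul_cancel₀ hpq.ne_zero], ENNReal.rpow_one,
          show 1/q * p = p/q by ring]

private lemma meas_orp (c : ℝ) : Measurable fun x : ℝ => ENNReal.ofReal (x ^ c) :=
  ENNReal.measurable_ofReal.comp (measurable_id.pow measurable_const)

private lemma hardyC (h : ℝ → ℝ≥0∞) (hmeas : Measurable h) {p : ℝ} (hp : 1 < p) :
    ∫⁻ y in Set.Ioi (0:ℝ), ((∫⁻ x in Set.Ioc (0:ℝ) y, h x) / ENNReal.ofReal y) ^ p
      ≤ ENNReal.ofReal (p^p/(p-1)^p) * ∫⁻ x in Set.Ioi (0:ℝ), h x ^ p := by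
  have hp0 : (0:ℝ) < p := by linarith
  have hpne : p ≠ 0 := hp0.ne'
  have hp1ne : p - 1 ≠ 0 := by intro h'; linarith [sub_eq_zero.mp h']
  have hq : p.HolderConjugate (p/(p-1)) := (Real.holderConjugate_iff_eq_conjExponent hp).2 rfl
  set q : ℝ := p/(p-1) with hqdef
  set r : ℝ := 1 - 1/p with hrdef
  have hip : 1/p < 1 := by rw [div_lt_one hp0]; exact hp
  have hipp : 0 < 1/p := by positivity
  have hr0 : (0:ℝ) < r := by rw [hrdef]; linarith
  have key : ∀ y ∈ Set.Ioi (0:ℝ),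
      ((∫⁻ x in Set.Ioc (0:ℝ) y, h x) / ENNReal.ofReal y) ^ p
        ≤ ENNReal.ofReal (r^(1-p)) * (ENNReal.ofReal (y^(1/p-2)) *
            ∫⁻ x in Set.Ioc (0:ℝ) y, h x ^ p * ENNReal.ofReal (x^r)) := by
    intro y hy
    have hy0 : (0:ℝ) < y := hy
    have e1 : ∫⁻ x in Set.Ioc (0:ℝ) y, h x
        = ∫⁻ x in Set.Ioc (0:ℝ) y,
            (h x * ENNReal.ofReal (x^(r/p))) * ENNReal.ofReal (x^(-(r/p))) := by
      refine setLIntegral_congr_fun measurableSet_Ioc (fun x hx => ?_)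
      rw [mul_assoc, ← ENNReal.ofReal_mul (Real.rpow_nonneg hx.1.le _),
        ← Real.rpow_add hx.1, add_neg_cancel, Real.rpow_zero, ENNReal.ofReal_one, mul_one]
    have holder : (∫⁻ x in Set.Ioc (0:ℝ) y,
          (h x * ENNReal.ofReal (x^(r/p))) * ENNReal.ofReal (x^(-(r/p)))) ^ p
        ≤ (∫⁻ x in Set.Ioc (0:ℝ) y, (h x * ENNReal.ofReal (x^(r/p))) ^ p)
          * (∫⁻ x in Set.Ioc (0:ℝ) y, (ENNReal.ofReal (x^(-(r/p)))) ^ q) ^ (p/q) :=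
      holder_pow (hmeas.mul (meas_orp _)) (meas_orp _) hq
    have e2 : ∫⁻ x in Set.Ioc (0:ℝ) y, (h x * ENNReal.ofReal (x^(r/p))) ^ p
        = ∫⁻ x in Set.Ioc (0:ℝ) y, h x ^ p * ENNReal.ofReal (x^r) := by
      refine setLIntegral_congr_fun measurableSet_Ioc (fun x hx => ?_)
      rw [ENNReal.mul_rpow_of_nonneg _ _ hp0.le,
        ENNReal.ofReal_rpow_of_pos (Real.rpow_pos_of_pos hx.1 _),
        ← Real.rpow_mul hx.1.le, show r/p*p = r from by field_simp]
    have e3 : ∫⁻ x in Set.Ioc (0:ℝ) y, (ENNReal.ofReal (x^(-(r/p)))) ^ q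
        = ENNReal.ofReal (y^r / r) := by
      rw [setLIntegral_congr_fun measurableSet_Ioc (fun x hx =>
        show (ENNReal.ofReal (x^(-(r/p)))) ^ q = ENNReal.ofReal (x^(-(1/p))) from by
          rw [ENNReal.ofReal_rpow_of_pos (Real.rpow_pos_of_pos hx.1 _),
            ← Real.rpow_mul hx.1.le,
            show -(r/p)*q = -(1/p) from by rw [hrdef, hqdef]; field_simp])]
      rw [lint_rpow_Ioc (by linarith) hy0, show -(1/p)+1 = r from by rw [hrdef]; ring]
    have hreal : (y^r/r)^(p-1) / y^p = r^(1-p) * y^(1/p-2) := by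
      rw [Real.div_rpow (Real.rpow_nonneg hy0.le _) hr0.le, ← Real.rpow_mul hy0.le,
        div_right_comm, ← Real.rpow_sub hy0,
        show r*(p-1) - p = 1/p - 2 from by rw [hrdef]; field_simp; ring,
        div_eq_mul_inv, ← Real.rpow_neg_one (r^(p-1)), ← Real.rpow_mul hr0.le,
        show (p-1)*(-1) = 1-p from by ring, mul_comm]
    calc ((∫⁻ x in Set.Ioc (0:ℝ) y, h x) / ENNReal.ofReal y) ^ p
        = (∫⁻ x in Set.Ioc (0:ℝ) y, h x) ^ p / ENNReal.ofReal (y^p) := by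
          rw [ENNReal.div_rpow_of_nonneg _ _ hp0.le, ENNReal.ofReal_rpow_of_pos hy0]
      _ ≤ ((∫⁻ x in Set.Ioc (0:ℝ) y, h x ^ p * ENNReal.ofReal (x^r))
            * (ENNReal.ofReal (y^r/r)) ^ (p/q)) / ENNReal.ofReal (y^p) := by
          apply ENNReal.div_le_div_right
          rw [e1]
          exact holder.trans_eq (by rw [e2, e3])
      _ = ENNReal.ofReal (r^(1-p)) * (ENNReal.ofReal (y^(1/p-2)) *
            ∫⁻ x in Set.Ioc (0:ℝ) y, h x ^ p * ENNReal.ofReal (x^r)) := by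
          rw [ENNReal.ofReal_rpow_of_pos (div_pos (Real.rpow_pos_of_pos hy0 _) hr0),
            show p/q = p - 1 from by rw [hqdef]; field_simp,
            mul_div_assoc, ← ENNReal.ofReal_div_of_pos (Real.rpow_pos_of_pos hy0 p),
            hreal, ENNReal.ofReal_mul (Real.rpow_nonneg hr0.le _)]
          ring
  calc ∫⁻ y in Set.Ioi (0:ℝ), ((∫⁻ x in Set.Ioc (0:ℝ) y, h x) / ENNReal.ofReal y) ^ p
      ≤ ∫⁻ y in Set.Ioi (0:ℝ), ENNReal.ofReal (r^(1-p)) * (ENNReal.ofReal (y^(1/p-2)) *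
          ∫⁻ x in Set.Ioc (0:ℝ) y, h x ^ p * ENNReal.ofReal (x^r)) :=
        lintegral_mono_ae ((ae_restrict_iff' measurableSet_Ioi).2 (ae_of_all _ key))
    _ = ENNReal.ofReal (r^(1-p)) * ∫⁻ y in Set.Ioi (0:ℝ), ENNReal.ofReal (y^(1/p-2)) *
          ∫⁻ x in Set.Ioc (0:ℝ) y, h x ^ p * ENNReal.ofReal (x^r) :=
        lintegral_const_mul' _ _ ENNReal.ofReal_ne_top
    _ = ENNReal.ofReal (r^(1-p)) * ∫⁻ x in Set.Ioi (0:ℝ),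
          (h x ^ p * ENNReal.ofReal (x^r)) * ∫⁻ y in Set.Ici x, ENNReal.ofReal (y^(1/p-2)) := by
        rw [lint_swap (g := fun x => h x ^ p * ENNReal.ofReal (x^r)) (meas_orp _) ((hmeas.pow measurable_const).mul (meas_orp _))]
    _ = ENNReal.ofReal (r^(1-p)) * ∫⁻ x in Set.Ioi (0:ℝ), h x ^ p * ENNReal.ofReal (1/r) := by
        refine congrArg _ (setLIntegral_congr_fun measurableSet_Ioi (fun x hx => ?_))
        have hx0 : (0:ℝ) < x := hx
        rw [show (∫⁻ y in Set.Ici x, ENNReal.ofReal (y^(1/p-2)))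
            = ENNReal.ofReal (x^(-r)/r) from by
          rw [← setLIntegral_congr (Ioi_ae_eq_Ici (a := x) (μ := volume)),
            lint_rpow_Ioi (by linarith) hx0, show 1/p-2+1 = -r from by rw [hrdef]; ring,
            neg_neg]]
        rw [mul_assoc, ← ENNReal.ofReal_mul (Real.rpow_nonneg hx0.le _),
          show x^r * (x^(-r)/r) = 1/r from by
            rw [← mul_div_assoc, ← Real.rpow_add hx0, add_neg_cancel, Real.rpow_zero]]
    _ = ENNReal.ofReal (p^p/(p-1)^p) * ∫⁻ x in Set.Ioi (0:ℝ), h x ^ p := by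
        rw [lintegral_mul_const' _ _ ENNReal.ofReal_ne_top,
          show ∀ (A B C : ℝ≥0∞), A * (C * B) = (B * A) * C from fun A B C => by ring,
          ← ENNReal.ofReal_mul (by positivity)]
        congr 2
        rw [show 1/r * r^(1-p) = r^(-p) from by
            rw [one_div, ← Real.rpow_neg_one r, ← Real.rpow_add hr0]; congr 1; ring,
          Real.rpow_neg hr0.le, ← Real.inv_rpow hr0.le,
          show r⁻¹ = p/(p-1) from by
            rw [hrdef, show (1:ℝ) - 1/p = (p-1)/p from by field_simp, inv_div],
          Real.div_rpow hp0.le (by linarith)]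


private lemma hardyD (h : ℝ → ℝ≥0∞) (hmeas : Measurable h) {p : ℝ} (hp : 1 < p) :
    ∫⁻ y in Set.Ioi (0:ℝ), (∫⁻ x in Set.Ioi y, h x / ENNReal.ofReal x) ^ p
      ≤ ENNReal.ofReal (p^p) * ∫⁻ x in Set.Ioi (0:ℝ), h x ^ p := by
  have hp0 : (0:ℝ) < p := by linarith
  have hpne : p ≠ 0 := hp0.ne'
  have hp1ne : p - 1 ≠ 0 := by intro h'; linarith [sub_eq_zero.mp h']
  have hq : p.HolderConjugate (p/(p-1)) := (Real.holderConjugate_iff_eq_conjExponent hp).2 rfl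
  set q : ℝ := p/(p-1) with hqdef
  set a : ℝ := -(1/(p*p)) with hadef
  set b : ℝ := 1/(p*p) - 1 with hbdef
  have hip : 1/p < 1 := by rw [div_lt_one hp0]; exact hp
  have hipp : 0 < 1/p := by positivity
  have key : ∀ y ∈ Set.Ioi (0:ℝ),
      (∫⁻ x in Set.Ioi y, h x / ENNReal.ofReal x) ^ p
        ≤ ENNReal.ofReal (p^(p-1)) * (ENNReal.ofReal (y^(1/p-1)) *
            ∫⁻ x in Set.Ioi y, h x ^ p * ENNReal.ofReal (x^(-(1/p)))) := by
    intro y hy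
    have hy0 : (0:ℝ) < y := hy
    have e1 : ∫⁻ x in Set.Ioi y, h x / ENNReal.ofReal x
        = ∫⁻ x in Set.Ioi y,
            (h x * ENNReal.ofReal (x^a)) * ENNReal.ofReal (x^b) := by
      refine setLIntegral_congr_fun measurableSet_Ioi (fun x hx => ?_)
      have hx0 : (0:ℝ) < x := lt_trans hy0 hx
      rw [mul_assoc, ← ENNReal.ofReal_mul (Real.rpow_nonneg hx0.le _),
        ← Real.rpow_add hx0, show a+b = -1 from by rw [hadef, hbdef]; ring,
        Real.rpow_neg_one, ENNReal.ofReal_inv_of_pos hx0, ← div_eq_mul_inv]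
    have holder : (∫⁻ x in Set.Ioi y,
          (h x * ENNReal.ofReal (x^a)) * ENNReal.ofReal (x^b)) ^ p
        ≤ (∫⁻ x in Set.Ioi y, (h x * ENNReal.ofReal (x^a)) ^ p)
          * (∫⁻ x in Set.Ioi y, (ENNReal.ofReal (x^b)) ^ q) ^ (p/q) :=
      holder_pow (hmeas.mul (meas_orp _)) (meas_orp _) hq
    have e2 : ∫⁻ x in Set.Ioi y, (h x * ENNReal.ofReal (x^a)) ^ p
        = ∫⁻ x in Set.Ioi y, h x ^ p * ENNReal.ofReal (x^(-(1/p))) := by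
      refine setLIntegral_congr_fun measurableSet_Ioi (fun x hx => ?_)
      have hx0 : (0:ℝ) < x := lt_trans hy0 hx
      rw [ENNReal.mul_rpow_of_nonneg _ _ hp0.le,
        ENNReal.ofReal_rpow_of_pos (Real.rpow_pos_of_pos hx0 _),
        ← Real.rpow_mul hx0.le, show a*p = -(1/p) from by rw [hadef]; field_simp]
    have e3 : ∫⁻ x in Set.Ioi y, (ENNReal.ofReal (x^b)) ^ q
        = ENNReal.ofReal (y^(-(1/p)) / (1/p)) := by
      rw [setLIntegral_congr_fun measurableSet_Ioi (fun x hx =>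
        show (ENNReal.ofReal (x^b)) ^ q = ENNReal.ofReal (x^(-((p+1)/p))) from by
          have hx0 : (0:ℝ) < x := lt_trans hy0 hx
          rw [ENNReal.ofReal_rpow_of_pos (Real.rpow_pos_of_pos hx0 _),
            ← Real.rpow_mul hx0.le,
            show b*q = -((p+1)/p) from by rw [hbdef, hqdef]; field_simp; ring])]
      rw [lint_rpow_Ioi (show -((p+1)/p) < -1 from by
          have : (1:ℝ) < (p+1)/p := by rw [lt_div_iff₀ hp0]; linarith
          linarith) hy0,
        show -((p+1)/p)+1 = -(1/p) from by field_simp; ring,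
        show -(-(1/p)) = 1/p from by ring]
    have hreal : (y^(-(1/p))/(1/p))^(p-1) = p^(p-1) * y^(1/p-1) := by
      rw [div_div_eq_mul_div, div_one, Real.mul_rpow (Real.rpow_nonneg hy0.le _) hp0.le,
        ← Real.rpow_mul hy0.le, show -(1/p)*(p-1) = 1/p-1 from by field_simp; ring, mul_comm]
    calc (∫⁻ x in Set.Ioi y, h x / ENNReal.ofReal x) ^ p
        ≤ (∫⁻ x in Set.Ioi y, h x ^ p * ENNReal.ofReal (x^(-(1/p))))
            * (ENNReal.ofReal (y^(-(1/p)) / (1/p))) ^ (p/q) := by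
          rw [e1]
          exact holder.trans_eq (by rw [e2, e3])
      _ = ENNReal.ofReal (p^(p-1)) * (ENNReal.ofReal (y^(1/p-1)) *
            ∫⁻ x in Set.Ioi y, h x ^ p * ENNReal.ofReal (x^(-(1/p)))) := by
          rw [ENNReal.ofReal_rpow_of_pos (div_pos (Real.rpow_pos_of_pos hy0 _) hipp),
            show p/q = p - 1 from by rw [hqdef]; field_simp,
            hreal, ENNReal.ofReal_mul (Real.rpow_nonneg hp0.le _)]
          ring
  calc ∫⁻ y in Set.Ioi (0:ℝ), (∫⁻ x in Set.Ioi y, h x / ENNReal.ofReal x) ^ p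
      ≤ ∫⁻ y in Set.Ioi (0:ℝ), ENNReal.ofReal (p^(p-1)) * (ENNReal.ofReal (y^(1/p-1)) *
          ∫⁻ x in Set.Ioi y, h x ^ p * ENNReal.ofReal (x^(-(1/p)))) :=
        lintegral_mono_ae ((ae_restrict_iff' measurableSet_Ioi).2 (ae_of_all _ key))
    _ = ENNReal.ofReal (p^(p-1)) * ∫⁻ y in Set.Ioi (0:ℝ), ENNReal.ofReal (y^(1/p-1)) *
          ∫⁻ x in Set.Ioi y, h x ^ p * ENNReal.ofReal (x^(-(1/p))) :=
        lintegral_const_mul' _ _ ENNReal.ofReal_ne_top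
    _ = ENNReal.ofReal (p^(p-1)) * ∫⁻ x in Set.Ioi (0:ℝ),
          (h x ^ p * ENNReal.ofReal (x^(-(1/p)))) * ∫⁻ y in Set.Ioc (0:ℝ) x, ENNReal.ofReal (y^(1/p-1)) := by
        rw [lint_swap' (g := fun x => h x ^ p * ENNReal.ofReal (x^(-(1/p)))) (meas_orp _) ((hmeas.pow measurable_const).mul (meas_orp _))]
    _ = ENNReal.ofReal (p^(p-1)) * ∫⁻ x in Set.Ioi (0:ℝ), h x ^ p * ENNReal.ofReal (1/(1/p)) := by
        refine congrArg _ (setLIntegral_congr_fun measurableSet_Ioi (fun x hx => ?_))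
        have hx0 : (0:ℝ) < x := hx
        rw [lint_rpow_Ioc (by linarith) hx0, show 1/p-1+1 = 1/p from by ring,
          mul_assoc, ← ENNReal.ofReal_mul (Real.rpow_nonneg hx0.le _),
          show x^(-(1/p)) * (x^(1/p)/(1/p)) = 1/(1/p) from by
            rw [← mul_div_assoc, ← Real.rpow_add hx0, neg_add_cancel, Real.rpow_zero]]
    _ = ENNReal.ofReal (p^p) * ∫⁻ x in Set.Ioi (0:ℝ), h x ^ p := by
        rw [lintegral_mul_const' _ _ ENNReal.ofReal_ne_top,
          show ∀ (A B C : ℝ≥0∞), A * (C * B) = (B * A) * C from fun A B C => by ring,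
          ← ENNReal.ofReal_mul (by positivity)]
        congr 2
        rw [one_div_one_div]
        calc p * p^(p-1) = p^(1:ℝ) * p^(p-1) := by rw [Real.rpow_one]
          _ = p^(1+(p-1)) := (Real.rpow_add hp0 _ _).symm
          _ = p^p := by norm_num

/-- Hardy-type inequality: for nonnegative measurable `h` on `(0,∞)` and `p ∈ (1,∞)`,
`∫₀^∞ (∫₀^∞ h(x)/(x+y) dx)^p dy ≤ C_p ∫₀^∞ h(x)^p dx` with
`C_p = 2^{p-1}(p^p/(p-1)^p + p^p)`. -/
theorem hardy_type_inequality (h : ℝ → ℝ≥0∞) (hmeas : Measurable h) (p : ℝ) (hp : 1 < p) :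
    ∫⁻ y in Set.Ioi (0 : ℝ), (∫⁻ x in Set.Ioi (0 : ℝ), h x / ENNReal.ofReal (x + y)) ^ p
      ≤ ENNReal.ofReal (2 ^ (p - 1) * (p ^ p / (p - 1) ^ p + p ^ p)) *
        ∫⁻ x in Set.Ioi (0 : ℝ), (h x) ^ p := by
  have hp0 : (0:ℝ) < p := by linarith
  have key : ∀ y ∈ Set.Ioi (0:ℝ),
      (∫⁻ x in Set.Ioi (0:ℝ), h x / ENNReal.ofReal (x + y)) ^ p
        ≤ ENNReal.ofReal (2^(p-1)) *
            (((∫⁻ x in Set.Ioc (0:ℝ) y, h x) / ENNReal.ofReal y) ^ p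
              + (∫⁻ x in Set.Ioi y, h x / ENNReal.ofReal x) ^ p) := by
    intro y hy
    have hy0 : (0:ℝ) < y := hy
    have hbound : (∫⁻ x in Set.Ioi (0:ℝ), h x / ENNReal.ofReal (x + y))
        ≤ (∫⁻ x in Set.Ioc (0:ℝ) y, h x) / ENNReal.ofReal y
          + ∫⁻ x in Set.Ioi y, h x / ENNReal.ofReal x := by
      rw [show Set.Ioi (0:ℝ) = Set.Ioc (0:ℝ) y ∪ Set.Ioi y from
          (Set.Ioc_union_Ioi_eq_Ioi hy0.le).symm,
        lintegral_union measurableSet_Ioi Set.Ioc_disjoint_Ioi_same]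
      refine add_le_add ?_ ?_
      · have hinv : (ENNReal.ofReal y)⁻¹ ≠ ⊤ := by
          rw [Ne, ENNReal.inv_eq_top, ENNReal.ofReal_eq_zero]; linarith
        calc ∫⁻ x in Set.Ioc (0:ℝ) y, h x / ENNReal.ofReal (x + y)
            ≤ ∫⁻ x in Set.Ioc (0:ℝ) y, h x / ENNReal.ofReal y :=
              lintegral_mono_ae ((ae_restrict_iff' measurableSet_Ioc).2 (ae_of_all _
                fun x hx => ENNReal.div_le_div le_rfl
                  (ENNReal.ofReal_le_ofReal (by linarith [hx.1]))))
          _ = (∫⁻ x in Set.Ioc (0:ℝ) y, h x) / ENNReal.ofReal y := by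
              simp_rw [div_eq_mul_inv]
              rw [lintegral_mul_const' _ _ hinv]
      · exact lintegral_mono_ae ((ae_restrict_iff' measurableSet_Ioi).2 (ae_of_all _
          fun x hx => ENNReal.div_le_div le_rfl
            (ENNReal.ofReal_le_ofReal (by linarith))))
    calc (∫⁻ x in Set.Ioi (0:ℝ), h x / ENNReal.ofReal (x + y)) ^ p
        ≤ ((∫⁻ x in Set.Ioc (0:ℝ) y, h x) / ENNReal.ofReal y
            + ∫⁻ x in Set.Ioi y, h x / ENNReal.ofReal x) ^ p :=
          ENNReal.rpow_le_rpow hbound hp0.le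
      _ ≤ (2:ℝ≥0∞)^(p-1) * (((∫⁻ x in Set.Ioc (0:ℝ) y, h x) / ENNReal.ofReal y) ^ p
            + (∫⁻ x in Set.Ioi y, h x / ENNReal.ofReal x) ^ p) :=
          ENNReal.rpow_add_le_mul_rpow_add_rpow _ _ hp.le
      _ = ENNReal.ofReal (2^(p-1)) * _ := by
          congr 1
          rw [← ENNReal.ofReal_ofNat 2, ENNReal.ofReal_rpow_of_pos (by norm_num)]
  have hFm : Measurable fun y : ℝ => ((∫⁻ x in Set.Ioc (0:ℝ) y, h x) / ENNReal.ofReal y) ^ p := by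
    have h1 : Monotone fun y : ℝ => ∫⁻ x in Set.Ioc (0:ℝ) y, h x := fun y z hyz =>
      lintegral_mono_set (Set.Ioc_subset_Ioc_right hyz)
    exact ((h1.measurable).div (ENNReal.measurable_ofReal.comp measurable_id)).pow
      measurable_const
  calc ∫⁻ y in Set.Ioi (0:ℝ), (∫⁻ x in Set.Ioi (0:ℝ), h x / ENNReal.ofReal (x + y)) ^ p
      ≤ ∫⁻ y in Set.Ioi (0:ℝ), ENNReal.ofReal (2^(p-1)) *
          (((∫⁻ x in Set.Ioc (0:ℝ) y, h x) / ENNReal.ofReal y) ^ p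
            + (∫⁻ x in Set.Ioi y, h x / ENNReal.ofReal x) ^ p) :=
        lintegral_mono_ae ((ae_restrict_iff' measurableSet_Ioi).2 (ae_of_all _ key))
    _ = ENNReal.ofReal (2^(p-1)) * ∫⁻ y in Set.Ioi (0:ℝ),
          (((∫⁻ x in Set.Ioc (0:ℝ) y, h x) / ENNReal.ofReal y) ^ p
            + (∫⁻ x in Set.Ioi y, h x / ENNReal.ofReal x) ^ p) :=
        lintegral_const_mul' _ _ ENNReal.ofReal_ne_top
    _ = ENNReal.ofReal (2^(p-1)) *
          ((∫⁻ y in Set.Ioi (0:ℝ), ((∫⁻ x in Set.Ioc (0:ℝ) y, h x) / ENNReal.ofReal y) ^ p)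
            + ∫⁻ y in Set.Ioi (0:ℝ), (∫⁻ x in Set.Ioi y, h x / ENNReal.ofReal x) ^ p) := by
        rw [lintegral_add_left hFm]
    _ ≤ ENNReal.ofReal (2^(p-1)) *
          (ENNReal.ofReal (p^p/(p-1)^p) * (∫⁻ x in Set.Ioi (0:ℝ), h x ^ p)
            + ENNReal.ofReal (p^p) * ∫⁻ x in Set.Ioi (0:ℝ), h x ^ p) :=
        mul_le_mul_right (add_le_add (hardyC h hmeas hp) (hardyD h hmeas hp)) _
    _ = ENNReal.ofReal (2 ^ (p - 1) * (p ^ p / (p - 1) ^ p + p ^ p)) *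
          ∫⁻ x in Set.Ioi (0 : ℝ), (h x) ^ p := by
        have h1 : (0:ℝ) ≤ p^p/(p-1)^p :=
          div_nonneg (Real.rpow_nonneg hp0.le _) (Real.rpow_nonneg (by linarith) _)
        have h2 : (0:ℝ) ≤ p^p := Real.rpow_nonneg hp0.le _
        rw [← add_mul, ← ENNReal.ofReal_add h1 h2, ← mul_assoc,
          ← ENNReal.ofReal_mul (Real.rpow_nonneg (by norm_num) _)]
end

section
/- For any 0 < σ, α with σ + α < 1, and any 0 < s, the integral ∫₀^s min{1, a/(s−τ)} (s−τ)^{α−1} τ^{−σ−α} dτ ≤ C a^α s^{−σ−α} holds for all a > 0, where C depends only on σ, α. -/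
open MeasureTheory

private lemma min_one_le_rpow {x α : ℝ} (hx : 0 < x) (hα : 0 ≤ α) (hα1 : α ≤ 1) :
    min 1 x ≤ x ^ α := by
  rcases le_total x 1 with h | h
  · rw [min_eq_right h]
    calc x = x ^ (1 : ℝ) := (Real.rpow_one x).symm
    _ ≤ x ^ α := Real.rpow_le_rpow_of_exponent_ge hx h hα1
  · rw [min_eq_left h]
    exact Real.one_le_rpow h hα

/-- For `σ, α ∈ (0,1)` with `σ + α < 1` there is `C > 0` (depending only on `σ, α`) such
that for all `s > 0` and `a > 0`,
`∫₀^s min{1, a/(s−τ)} (s−τ)^{α−1} τ^{−σ−α} dτ ≤ C a^α s^{−σ−α}`. -/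
theorem min_kernel_time_integral_bound (σ α : ℝ) (hσ : 0 < σ) (hα : 0 < α)
    (hσα : σ + α < 1) :
    ∃ C : ℝ, 0 < C ∧ ∀ s a : ℝ, 0 < s → 0 < a →
      (∫ τ in Set.Ioo (0 : ℝ) s,
          min 1 (a / (s - τ)) * (s - τ) ^ (α - 1) * τ ^ (-σ - α))
        ≤ C * a ^ α * s ^ (-σ - α) := by
  have hα1 : α < 1 := by linarith
  have h1σα : 0 < 1 - σ - α := by linarith
  refine ⟨2 / (1 - σ - α) + 2 / (1 - α) + 2 / α,
    add_pos (add_pos (div_pos two_pos h1σα) (div_pos two_pos (by linarith)))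
      (div_pos two_pos hα), ?_⟩
  intro s a hs ha
  set f : ℝ → ℝ := fun τ => min 1 (a / (s - τ)) * (s - τ) ^ (α - 1) * τ ^ (-σ - α) with hf
  set b : ℝ := max (s / 2) (s - a) with hbdef
  set m : ℝ := s - b with hmdef
  have hs2 : 0 < s / 2 := by linarith
  have h2s : s / 2 < s := by linarith
  have hbs : b < s := max_lt h2s (by linarith)
  have hsb : s / 2 ≤ b := le_max_left _ _
  have hm : 0 < m := by simp only [hmdef]; linarith
  have hma : m ≤ a := by
    have := le_max_right (s / 2) (s - a)
    simp only [hmdef]; linarith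
  -- nonnegativity of f on (0, s)
  have hf0 : ∀ τ ∈ Set.Ioo (0 : ℝ) s, 0 ≤ f τ := by
    intro τ hτ
    have h1 : 0 < s - τ := by have := hτ.2; linarith
    have h2 : 0 < τ := hτ.1
    have : 0 ≤ min 1 (a / (s - τ)) := le_min zero_le_one (by positivity)
    positivity
  -- continuity of f on (0, s)
  have hfc : ContinuousOn f (Set.Ioo (0 : ℝ) s) := by
    have c1 : ContinuousOn (fun τ : ℝ => a / (s - τ)) (Set.Ioo (0 : ℝ) s) := by
      apply ContinuousOn.div continuousOn_const (by fun_prop)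
      intro τ hτ
      have : 0 < s - τ := by have := hτ.2; linarith
      exact ne_of_gt this
    have c2 : ContinuousOn (fun τ : ℝ => (s - τ) ^ (α - 1)) (Set.Ioo (0 : ℝ) s) := by
      apply ContinuousOn.rpow_const (by fun_prop)
      intro τ hτ
      have : 0 < s - τ := by have := hτ.2; linarith
      exact Or.inl (ne_of_gt this)
    have c3 : ContinuousOn (fun τ : ℝ => τ ^ (-σ - α)) (Set.Ioo (0 : ℝ) s) := by
      apply ContinuousOn.rpow_const (by fun_prop)
      intro τ hτ
      exact Or.inl (ne_of_gt hτ.1)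
    exact ((ContinuousOn.inf continuousOn_const c1).mul c2).mul c3
  -- the three dominating functions
  set g₁ : ℝ → ℝ := fun τ => (2 * a / s) ^ α * (s / 2) ^ (α - 1) * τ ^ (-σ - α) with hg₁
  set g₂ : ℝ → ℝ := fun τ => a * (s / 2) ^ (-σ - α) * (s - τ) ^ (α - 2) with hg₂
  set g₃ : ℝ → ℝ := fun τ => (s / 2) ^ (-σ - α) * (s - τ) ^ (α - 1) with hg₃
  -- subset facts
  have hsub1 : Set.Ioc (0 : ℝ) (s / 2) ⊆ Set.Ioo (0 : ℝ) s :=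
    fun τ hτ => ⟨hτ.1, lt_of_le_of_lt hτ.2 h2s⟩
  have hsub2 : Set.Ioc (s / 2) b ⊆ Set.Ioo (0 : ℝ) s :=
    fun τ hτ => ⟨lt_trans hs2 hτ.1, lt_of_le_of_lt hτ.2 hbs⟩
  have hsub3 : Set.Ioo b s ⊆ Set.Ioo (0 : ℝ) s :=
    fun τ hτ => ⟨lt_trans (lt_of_lt_of_le hs2 hsb) hτ.1, hτ.2⟩
  -- pointwise bounds
  have hb₁ : ∀ τ ∈ Set.Ioc (0 : ℝ) (s / 2), f τ ≤ g₁ τ := by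
    intro τ hτ
    have hτ0 : 0 < τ := hτ.1
    have hsτ : s / 2 ≤ s - τ := by have := hτ.2; linarith
    have hsτ0 : 0 < s - τ := lt_of_lt_of_le hs2 hsτ
    have h1 : min 1 (a / (s - τ)) ≤ (2 * a / s) ^ α := by
      calc min 1 (a / (s - τ)) ≤ (a / (s - τ)) ^ α :=
            min_one_le_rpow (by positivity) hα.le hα1.le
      _ ≤ (2 * a / s) ^ α := by
        apply Real.rpow_le_rpow (by positivity) _ hα.le
        rw [div_le_div_iff₀ hsτ0 hs]
        nlinarith
    have h2 : (s - τ) ^ (α - 1) ≤ (s / 2) ^ (α - 1) :=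
      Real.rpow_le_rpow_of_nonpos hs2 hsτ (by linarith)
    have h3 : (0 : ℝ) ≤ τ ^ (-σ - α) := Real.rpow_nonneg hτ0.le _
    apply mul_le_mul_of_nonneg_right _ h3
    apply mul_le_mul h1 h2 (Real.rpow_nonneg hsτ0.le _) (by positivity)
  have hb₂ : ∀ τ ∈ Set.Ioc (s / 2) b, f τ ≤ g₂ τ := by
    intro τ hτ
    have hτ0 : 0 < τ := lt_trans hs2 hτ.1
    have hτs : τ < s := lt_of_le_of_lt hτ.2 hbs
    have hsτ0 : 0 < s - τ := by linarith
    have h1 : min 1 (a / (s - τ)) ≤ a / (s - τ) := min_le_right _ _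
    have h2 : τ ^ (-σ - α) ≤ (s / 2) ^ (-σ - α) :=
      Real.rpow_le_rpow_of_nonpos hs2 hτ.1.le (by linarith)
    have key : a / (s - τ) * (s - τ) ^ (α - 1) = a * (s - τ) ^ (α - 2) := by
      have e : (s - τ) ^ (α - 2) = (s - τ) ^ (α - 1) / (s - τ) := by
        rw [show α - 2 = α - 1 - 1 by ring, Real.rpow_sub hsτ0, Real.rpow_one]
      rw [e]; ring
    calc f τ ≤ (a / (s - τ) * (s - τ) ^ (α - 1)) * (s / 2) ^ (-σ - α) := by
          apply mul_le_mul _ h2 (Real.rpow_nonneg hτ0.le _) _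
          · exact mul_le_mul_of_nonneg_right h1 (Real.rpow_nonneg hsτ0.le _)
          · positivity
    _ = g₂ τ := by rw [key]; simp only [hg₂]; ring
  have hb₃ : ∀ τ ∈ Set.Ioo b s, f τ ≤ g₃ τ := by
    intro τ hτ
    have hτ0 : 0 < τ := lt_trans (lt_of_lt_of_le hs2 hsb) hτ.1
    have hsτ0 : 0 < s - τ := by have := hτ.2; linarith
    have h1 : min 1 (a / (s - τ)) ≤ 1 := min_le_left _ _
    have h2 : τ ^ (-σ - α) ≤ (s / 2) ^ (-σ - α) :=
      Real.rpow_le_rpow_of_nonpos hs2 (le_trans hsb hτ.1.le) (by linarith)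
    calc f τ ≤ (1 * (s - τ) ^ (α - 1)) * (s / 2) ^ (-σ - α) := by
          apply mul_le_mul _ h2 (Real.rpow_nonneg hτ0.le _) _
          · exact mul_le_mul_of_nonneg_right h1 (Real.rpow_nonneg hsτ0.le _)
          · positivity
    _ = g₃ τ := by simp only [hg₃]; ring
  -- integrability of the dominating functions
  have hig₁ : IntegrableOn g₁ (Set.Ioc (0 : ℝ) (s / 2)) := by
    have : IntegrableOn (fun τ : ℝ => τ ^ (-σ - α)) (Set.Ioc (0 : ℝ) (s / 2)) :=
      (intervalIntegrable_iff_integrableOn_Ioc_of_le hs2.le).1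
        (intervalIntegral.intervalIntegrable_rpow' (by linarith))
    exact this.const_mul _
  have hig₂ : IntegrableOn g₂ (Set.Ioc (s / 2) b) := by
    apply IntegrableOn.mono_set _ Set.Ioc_subset_Icc_self
    apply ContinuousOn.integrableOn_Icc
    apply ContinuousOn.mul continuousOn_const
    apply ContinuousOn.rpow_const (by fun_prop)
    intro τ hτ
    have : 0 < s - τ := by have := hτ.2; have := hbs; linarith
    exact Or.inl (ne_of_gt this)
  have hig₃ : IntegrableOn g₃ (Set.Ioo b s) := by
    have h0 : IntervalIntegrable (fun u : ℝ => u ^ (α - 1)) volume 0 m :=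
      intervalIntegral.intervalIntegrable_rpow' (by linarith)
    have h1 : IntervalIntegrable (fun τ : ℝ => (s - τ) ^ (α - 1)) volume (s - 0) (s - m) :=
      h0.comp_sub_left s
    rw [sub_zero, show s - m = b by simp [hmdef]] at h1
    have h2 : IntegrableOn (fun τ : ℝ => (s - τ) ^ (α - 1)) (Set.Ioc b s) :=
      (intervalIntegrable_iff_integrableOn_Ioc_of_le hbs.le).1 h1.symm
    exact (h2.mono_set Set.Ioo_subset_Ioc_self).const_mul _
  -- integrability of f on the pieces
  have hif₁ : IntegrableOn f (Set.Ioc (0 : ℝ) (s / 2)) := by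
    apply hig₁.mono' ((hfc.mono hsub1).aestronglyMeasurable measurableSet_Ioc)
    refine (ae_restrict_iff' measurableSet_Ioc).2 (ae_of_all _ fun τ hτ => ?_)
    rw [Real.norm_of_nonneg (hf0 τ (hsub1 hτ))]
    exact hb₁ τ hτ
  have hif₂ : IntegrableOn f (Set.Ioc (s / 2) b) := by
    apply hig₂.mono' ((hfc.mono hsub2).aestronglyMeasurable measurableSet_Ioc)
    refine (ae_restrict_iff' measurableSet_Ioc).2 (ae_of_all _ fun τ hτ => ?_)
    rw [Real.norm_of_nonneg (hf0 τ (hsub2 hτ))]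
    exact hb₂ τ hτ
  have hif₃ : IntegrableOn f (Set.Ioo b s) := by
    apply hig₃.mono' ((hfc.mono hsub3).aestronglyMeasurable measurableSet_Ioo)
    refine (ae_restrict_iff' measurableSet_Ioo).2 (ae_of_all _ fun τ hτ => ?_)
    rw [Real.norm_of_nonneg (hf0 τ (hsub3 hτ))]
    exact hb₃ τ hτ
  -- splitting the integral
  have e2 : Set.Ioo (s / 2) s = Set.Ioc (s / 2) b ∪ Set.Ioo b s :=
    (Set.Ioc_union_Ioo_eq_Ioo hsb hbs).symm
  have e1 : Set.Ioo (0 : ℝ) s = Set.Ioc (0 : ℝ) (s / 2) ∪ Set.Ioo (s / 2) s :=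
    (Set.Ioc_union_Ioo_eq_Ioo hs2.le h2s).symm
  have disj1 : Disjoint (Set.Ioc (0 : ℝ) (s / 2)) (Set.Ioo (s / 2) s) :=
    Set.disjoint_left.2 fun x hx hx' => absurd hx.2 (not_le.2 hx'.1)
  have disj2 : Disjoint (Set.Ioc (s / 2) b) (Set.Ioo b s) :=
    Set.disjoint_left.2 fun x hx hx' => absurd hx.2 (not_le.2 hx'.1)
  have hif23 : IntegrableOn f (Set.Ioo (s / 2) s) := by
    rw [e2]; exact hif₂.union hif₃
  have hsplit : ∫ τ in Set.Ioo (0 : ℝ) s, f τ =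
      (∫ τ in Set.Ioc (0 : ℝ) (s / 2), f τ) + ((∫ τ in Set.Ioc (s / 2) b, f τ)
        + ∫ τ in Set.Ioo b s, f τ) := by
    rw [e1, setIntegral_union disj1 measurableSet_Ioo hif₁ hif23, e2,
      setIntegral_union disj2 measurableSet_Ioo hif₂ hif₃]
  -- bounds on the three pieces
  have hmono1 : (∫ τ in Set.Ioc (0 : ℝ) (s / 2), f τ) ≤ ∫ τ in Set.Ioc (0 : ℝ) (s / 2), g₁ τ :=
    setIntegral_mono_on hif₁ hig₁ measurableSet_Ioc hb₁
  have hmono2 : (∫ τ in Set.Ioc (s / 2) b, f τ) ≤ ∫ τ in Set.Ioc (s / 2) b, g₂ τ :=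
    setIntegral_mono_on hif₂ hig₂ measurableSet_Ioc hb₂
  have hmono3 : (∫ τ in Set.Ioo b s, f τ) ≤ ∫ τ in Set.Ioo b s, g₃ τ :=
    setIntegral_mono_on hif₃ hig₃ measurableSet_Ioo hb₃
  -- compute the three dominating integrals
  have hcomp1 : (∫ τ in Set.Ioc (0 : ℝ) (s / 2), g₁ τ)
      = (2 * a / s) ^ α * (s / 2) ^ (α - 1) * ((s / 2) ^ (-σ - α + 1) / (-σ - α + 1)) := by
    rw [← intervalIntegral.integral_of_le hs2.le]
    simp only [hg₁]
    rw [intervalIntegral.integral_const_mul,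
      integral_rpow (Or.inl (by linarith)),
      Real.zero_rpow (by linarith), sub_zero]
  have hcomp2 : (∫ τ in Set.Ioc (s / 2) b, g₂ τ)
      = a * (s / 2) ^ (-σ - α) * (((s / 2) ^ (α - 1) - m ^ (α - 1)) / (α - 1)) := by
    rw [← intervalIntegral.integral_of_le hsb]
    simp only [hg₂]
    rw [intervalIntegral.integral_const_mul,
      intervalIntegral.integral_comp_sub_left (fun u : ℝ => u ^ (α - 2)) s,
      show s - b = m from rfl, show s - s / 2 = s / 2 by ring,
      integral_rpow (Or.inr ⟨by intro h; linarith, by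
        intro h
        rcases Set.mem_uIcc.1 h with ⟨h2, _⟩ | ⟨_, h3⟩ <;> linarith⟩)]
    norm_num [show α - 2 + 1 = α - 1 by ring]
  have hcomp3 : (∫ τ in Set.Ioo b s, g₃ τ)
      = (s / 2) ^ (-σ - α) * (m ^ (α - 1 + 1) / (α - 1 + 1)) := by
    rw [← integral_Ioc_eq_integral_Ioo, ← intervalIntegral.integral_of_le hbs.le]
    simp only [hg₃]
    rw [intervalIntegral.integral_const_mul,
      intervalIntegral.integral_comp_sub_left (fun u : ℝ => u ^ (α - 1)) s,
      show s - s = (0:ℝ) by ring, show s - b = m from rfl,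
      integral_rpow (Or.inl (by linarith)),
      Real.zero_rpow (by linarith), sub_zero]
  -- key constants
  have h2pow : (2 : ℝ) ^ (σ + α) ≤ 2 := by
    calc (2 : ℝ) ^ (σ + α) ≤ (2 : ℝ) ^ (1 : ℝ) :=
          Real.rpow_le_rpow_of_exponent_le one_le_two (by linarith)
    _ = 2 := Real.rpow_one 2
  have hhalf : (s / 2) ^ (-σ - α) = 2 ^ (σ + α) * s ^ (-σ - α) := by
    rw [Real.div_rpow hs.le (by norm_num), show -σ - α = -(σ + α) by ring,
      Real.rpow_neg (by norm_num : (0:ℝ) ≤ 2), div_inv_eq_mul]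
    ring
  have hA : (0 : ℝ) < a ^ α := Real.rpow_pos_of_pos ha _
  have hS : (0 : ℝ) < s ^ (-σ - α) := Real.rpow_pos_of_pos hs _
  -- bound piece 1
  have hB1 : (2 * a / s) ^ α * (s / 2) ^ (α - 1) * ((s / 2) ^ (-σ - α + 1) / (-σ - α + 1))
      ≤ 2 / (1 - σ - α) * (a ^ α * s ^ (-σ - α)) := by
    have e1 : (2 * a / s) ^ α = 2 ^ α * a ^ α / s ^ α := by
      rw [Real.div_rpow (by positivity) hs.le, Real.mul_rpow (by norm_num) ha.le]
    have e2 : (s / 2) ^ (α - 1) * (s / 2) ^ (-σ - α + 1) = (s / 2) ^ (-σ) := by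
      rw [← Real.rpow_add hs2]; congr 1; ring
    have e3 : (s / 2) ^ (-σ : ℝ) = 2 ^ σ * s ^ (-σ : ℝ) := by
      rw [Real.div_rpow hs.le (by norm_num), Real.rpow_neg (by norm_num : (0:ℝ) ≤ 2),
        div_inv_eq_mul, mul_comm]
    have e4 : a ^ α / s ^ α * s ^ (-σ : ℝ) = a ^ α * s ^ (-σ - α) := by
      rw [Real.rpow_sub hs]; ring
    have lhs_eq : (2 * a / s) ^ α * (s / 2) ^ (α - 1) * ((s / 2) ^ (-σ - α + 1) / (-σ - α + 1))
        = 2 ^ α * 2 ^ σ / (1 - σ - α) * (a ^ α * s ^ (-σ - α)) := by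
      calc (2 * a / s) ^ α * (s / 2) ^ (α - 1) * ((s / 2) ^ (-σ - α + 1) / (-σ - α + 1))
          = (2 * a / s) ^ α * ((s / 2) ^ (α - 1) * (s / 2) ^ (-σ - α + 1)) / (-σ - α + 1) := by
            ring
      _ = 2 ^ α * a ^ α / s ^ α * (2 ^ σ * s ^ (-σ : ℝ)) / (1 - σ - α) := by
            rw [e1, e2, e3, show -σ - α + 1 = 1 - σ - α by ring]
      _ = 2 ^ α * 2 ^ σ / (1 - σ - α) * (a ^ α / s ^ α * s ^ (-σ : ℝ)) := by ring
      _ = 2 ^ α * 2 ^ σ / (1 - σ - α) * (a ^ α * s ^ (-σ - α)) := by rw [e4]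
    rw [lhs_eq]
    apply mul_le_mul_of_nonneg_right _ (by positivity)
    apply (div_le_div_iff_of_pos_right h1σα).2
    calc (2:ℝ) ^ α * 2 ^ σ = 2 ^ (σ + α) := by
          rw [← Real.rpow_add (by norm_num : (0:ℝ) < 2)]; congr 1; ring
    _ ≤ 2 := h2pow
  -- bound piece 2
  have hB2 : a * (s / 2) ^ (-σ - α) * (((s / 2) ^ (α - 1) - m ^ (α - 1)) / (α - 1))
      ≤ 2 / (1 - α) * (a ^ α * s ^ (-σ - α)) := by
    have e0 : ((s / 2) ^ (α - 1) - m ^ (α - 1)) / (α - 1)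
        = (m ^ (α - 1) - (s / 2) ^ (α - 1)) / (1 - α) := by
      rw [div_eq_div_iff (by linarith) (by linarith)]; ring
    rw [e0]
    have h1 : (m ^ (α - 1) - (s / 2) ^ (α - 1)) / (1 - α) ≤ a ^ (α - 1) / (1 - α) := by
      apply (div_le_div_iff_of_pos_right (by linarith : (0:ℝ) < 1 - α)).2
      rcases le_total a (s / 2) with h | h
      · have hb' : b = s - a := max_eq_right (by linarith)
        have hm' : m = a := by rw [hmdef, hb']; ring
        rw [hm']
        have h2 : (0:ℝ) ≤ (s / 2) ^ (α - 1) := Real.rpow_nonneg hs2.le _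
        linarith
      · have hb' : b = s / 2 := max_eq_left (by linarith)
        have hm' : m = s / 2 := by rw [hmdef, hb']; ring
        rw [hm']
        have h2 : (0:ℝ) ≤ a ^ (α - 1) := Real.rpow_nonneg ha.le _
        linarith
    calc a * (s / 2) ^ (-σ - α) * ((m ^ (α - 1) - (s / 2) ^ (α - 1)) / (1 - α))
        ≤ a * (s / 2) ^ (-σ - α) * (a ^ (α - 1) / (1 - α)) := by
          apply mul_le_mul_of_nonneg_left h1 (by positivity)
    _ = (a * a ^ (α - 1)) * (s / 2) ^ (-σ - α) / (1 - α) := by ring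
    _ = a ^ α * (s / 2) ^ (-σ - α) / (1 - α) := by
          rw [show a * a ^ (α - 1) = a ^ (1:ℝ) * a ^ (α - 1) by rw [Real.rpow_one],
            ← Real.rpow_add ha, show (1:ℝ) + (α - 1) = α by ring]
    _ ≤ 2 / (1 - α) * (a ^ α * s ^ (-σ - α)) := by
          rw [hhalf]
          calc a ^ α * (2 ^ (σ + α) * s ^ (-σ - α)) / (1 - α)
              ≤ a ^ α * (2 * s ^ (-σ - α)) / (1 - α) := by
                apply (div_le_div_iff_of_pos_right (by linarith : (0:ℝ) < 1 - α)).2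
                apply mul_le_mul_of_nonneg_left _ hA.le
                exact mul_le_mul_of_nonneg_right h2pow hS.le
          _ = 2 / (1 - α) * (a ^ α * s ^ (-σ - α)) := by ring
  -- bound piece 3
  have hB3 : (s / 2) ^ (-σ - α) * (m ^ (α - 1 + 1) / (α - 1 + 1))
      ≤ 2 / α * (a ^ α * s ^ (-σ - α)) := by
    rw [show α - 1 + 1 = α by ring, hhalf]
    have h1 : m ^ α ≤ a ^ α := Real.rpow_le_rpow hm.le hma hα.le
    calc 2 ^ (σ + α) * s ^ (-σ - α) * (m ^ α / α)
        ≤ 2 * s ^ (-σ - α) * (a ^ α / α) := by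
          apply mul_le_mul (mul_le_mul_of_nonneg_right h2pow hS.le)
            ((div_le_div_iff_of_pos_right hα).2 h1) (by positivity) (by positivity)
    _ = 2 / α * (a ^ α * s ^ (-σ - α)) := by ring
  -- combine
  calc (∫ τ in Set.Ioo (0 : ℝ) s,
          min 1 (a / (s - τ)) * (s - τ) ^ (α - 1) * τ ^ (-σ - α))
      = (∫ τ in Set.Ioc (0 : ℝ) (s / 2), f τ) + ((∫ τ in Set.Ioc (s / 2) b, f τ)
        + ∫ τ in Set.Ioo b s, f τ) := hsplit
  _ ≤ (∫ τ in Set.Ioc (0 : ℝ) (s / 2), g₁ τ) + ((∫ τ in Set.Ioc (s / 2) b, g₂ τ)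
        + ∫ τ in Set.Ioo b s, g₃ τ) := by
        gcongr
  _ = (2 * a / s) ^ α * (s / 2) ^ (α - 1) * ((s / 2) ^ (-σ - α + 1) / (-σ - α + 1))
        + (a * (s / 2) ^ (-σ - α) * (((s / 2) ^ (α - 1) - m ^ (α - 1)) / (α - 1))
        + (s / 2) ^ (-σ - α) * (m ^ (α - 1 + 1) / (α - 1 + 1))) := by
        rw [hcomp1, hcomp2, hcomp3]
  _ ≤ 2 / (1 - σ - α) * (a ^ α * s ^ (-σ - α)) + (2 / (1 - α) * (a ^ α * s ^ (-σ - α))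
        + 2 / α * (a ^ α * s ^ (-σ - α))) := by
        exact add_le_add hB1 (add_le_add hB2 hB3)
  _ = (2 / (1 - σ - α) + 2 / (1 - α) + 2 / α) * a ^ α * s ^ (-σ - α) := by ring
end
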